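/- Let Δ be a G-graded division algebra over k which is graded symmetric, and let σ_1,…,σ_n ∈ G. Then the graded matrix algebra M_n(Δ)(σ_1,…,σ_n) is graded symmetric; explicitly, if λ : Δ → k witnesses graded symmetry of Δ, then Λ(x) = λ(tr(x)) witnesses graded symmetry of M_n(Δ)(σ_1,…,σ_n). -/

import Mathlib

open Module

/-- A left ideal of a `G`-graded algebra is graded if it is generated by its
homogeneous elements. -/
def IsGradedLeftIdeal {k A G : Type*} [Field k] [Ring A] [Algebra k A]
    (𝒜 : G → Submodule k A) (I : Submodule A A) : Prop :=
  I = Submodule.span A ((I : Set A) ∩ ⋃ g, (𝒜 g : Set A))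

/-- A `G`-graded algebra is graded symmetric if it admits a symmetric linear functional
vanishing on all homogeneous components of degree ≠ e, whose kernel contains no
nonzero graded left ideal. -/
def IsGradedSymmetric {k A G : Type*} [Field k] [Ring A] [Algebra k A] [Group G]
    (𝒜 : G → Submodule k A) : Prop :=
  ∃ lam : A →ₗ[k] k,
    (∀ a b : A, lam (a * b) = lam (b * a)) ∧
    (∀ g : G, g ≠ 1 → ∀ a ∈ 𝒜 g, lam a = 0) ∧
    ∀ I : Submodule A A, IsGradedLeftIdeal 𝒜 I → (∀ x ∈ I, lam x = 0) → I = ⊥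

/-- A `G`-graded division algebra: a `G`-grading of `A` in which every nonzero
homogeneous element is invertible. -/
structure IsGradedDivisionAlgebra {k A G : Type*} [Field k] [Ring A] [Algebra k A]
    [Group G] [DecidableEq G] (𝒜 : G → Submodule k A) : Prop where
  mul_mem : ∀ {g h : G} {a b : A}, a ∈ 𝒜 g → b ∈ 𝒜 h → a * b ∈ 𝒜 (g * h)
  one_mem : (1 : A) ∈ 𝒜 1
  internal : DirectSum.IsInternal 𝒜
  isUnit_of_ne_zero : ∀ g : G, ∀ a ∈ 𝒜 g, a ≠ 0 → IsUnit a

/-- If Δ is a graded symmetric graded division algebra, witnessed by lam, then the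
graded matrix algebra M_n(Δ)(σ₁,…,σₙ) is graded symmetric, witnessed by lam ∘ tr. -/
theorem gradedMatrix_isGradedSymmetric {k Δ G : Type*} [Field k] [Ring Δ] [Algebra k Δ]
    [Group G] [DecidableEq G]
    (𝒜 : G → Submodule k Δ) (hA : IsGradedDivisionAlgebra 𝒜)
    (n : ℕ) (hn : 0 < n) (σ : Fin n → G)
    (lam : Δ →ₗ[k] k)
    (hsymm : ∀ a b : Δ, lam (a * b) = lam (b * a))
    (hvanish : ∀ g : G, g ≠ 1 → ∀ a ∈ 𝒜 g, lam a = 0)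
    (hker : ∀ I : Submodule Δ Δ, IsGradedLeftIdeal 𝒜 I → (∀ x ∈ I, lam x = 0) → I = ⊥)
    (ℳ : G → Submodule k (Matrix (Fin n) (Fin n) Δ))
    (hℳ : ∀ (g : G) (M : Matrix (Fin n) (Fin n) Δ),
      M ∈ ℳ g ↔ ∀ i j : Fin n, M i j ∈ 𝒜 (σ i * g * (σ j)⁻¹)) :
    (∀ X Y : Matrix (Fin n) (Fin n) Δ,
      lam (Matrix.trace (X * Y)) = lam (Matrix.trace (Y * X))) ∧
    (∀ g : G, g ≠ 1 → ∀ M ∈ ℳ g, lam (Matrix.trace M) = 0) ∧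
    (∀ I : Submodule (Matrix (Fin n) (Fin n) Δ) (Matrix (Fin n) (Fin n) Δ),
      IsGradedLeftIdeal ℳ I → (∀ X ∈ I, lam (Matrix.trace X) = 0) → I = ⊥) ∧
    IsGradedSymmetric ℳ := by
  have h1 : ∀ X Y : Matrix (Fin n) (Fin n) Δ,
      lam (Matrix.trace (X * Y)) = lam (Matrix.trace (Y * X)) := by
    intro X Y
    simp only [Matrix.trace, Matrix.diag, Matrix.mul_apply, map_sum]
    rw [Finset.sum_comm]
    exact Finset.sum_congr rfl fun i _ => Finset.sum_congr rfl fun j _ => hsymm _ _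
  have h2 : ∀ g : G, g ≠ 1 → ∀ M ∈ ℳ g, lam (Matrix.trace M) = 0 := by
    intro g hg M hM
    have hM' := (hℳ g M).mp hM
    simp only [Matrix.trace, Matrix.diag, map_sum]
    refine Finset.sum_eq_zero fun i _ => ?_
    refine hvanish _ ?_ _ (hM' i i)
    intro h
    apply hg
    have h2 : σ i * g = σ i * 1 := by rw [mul_one]; exact mul_inv_eq_one.mp h
    exact mul_left_cancel h2
  have h3 : ∀ I : Submodule (Matrix (Fin n) (Fin n) Δ) (Matrix (Fin n) (Fin n) Δ),
      IsGradedLeftIdeal ℳ I → (∀ X ∈ I, lam (Matrix.trace X) = 0) → I = ⊥ := by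
    intro I hI hIlam
    have key : ∀ (q i : Fin n) (X : Matrix (Fin n) (Fin n) Δ), X ∈ I →
        (∃ g, X ∈ ℳ g) → X i q = 0 := by
      intro q i X hXI hXg
      set S : Set Δ := {d : Δ | ∃ X : Matrix (Fin n) (Fin n) Δ,
        X ∈ I ∧ (∃ g, X ∈ ℳ g) ∧ ∃ i : Fin n, d = X i q} with hS
      set L : Submodule Δ Δ := Submodule.span Δ S with hL
      -- trace computation for generators
      have htr : ∀ (d : Δ) (j : Fin n) (X : Matrix (Fin n) (Fin n) Δ),
          Matrix.trace (Matrix.single q j d * X) = d * X j q := by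
        intro d j X
        rw [Matrix.trace, Finset.sum_eq_single q]
        · simp [Matrix.diag]
        · intro b _ hb
          simp [Matrix.diag, Matrix.single_mul_apply_of_ne (h := hb)]
        · intro h; exact absurd (Finset.mem_univ q) h
      -- lam vanishes on L
      have hvan : ∀ x ∈ L, ∀ d : Δ, lam (d * x) = 0 := by
        intro x hx
        refine Submodule.span_induction ?_ ?_ ?_ ?_ hx
        · rintro s ⟨Y, hYI, -, j, rfl⟩ d
          have hmem : Matrix.single q j d * Y ∈ I := I.smul_mem _ hYI
          have := hIlam _ hmem
          rwa [htr] at this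
        · intro d; simp
        · intro a b _ _ ha hb d
          rw [mul_add, map_add, ha, hb, add_zero]
        · intro c a _ ha d
          have : d * (c • a) = (d * c) * a := by
            rw [smul_eq_mul, mul_assoc]
          rw [this, ha]
      -- S consists of homogeneous elements
      have hShom : S ⊆ ⋃ g, (𝒜 g : Set Δ) := by
        rintro s ⟨Y, hYI, ⟨g, hYg⟩, j, rfl⟩
        exact Set.mem_iUnion.mpr ⟨σ j * g * (σ q)⁻¹, (hℳ g Y).mp hYg j q⟩
      have hgraded : IsGradedLeftIdeal 𝒜 L := by
        unfold IsGradedLeftIdeal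
        refine le_antisymm ?_ ?_
        · exact Submodule.span_mono fun s hs =>
            ⟨Submodule.subset_span hs, hShom hs⟩
        · exact Submodule.span_le.mpr Set.inter_subset_left
      have hL0 : L = ⊥ := by
        refine hker L hgraded fun x hx => ?_
        have := hvan x hx 1
        rwa [one_mul] at this
      have hmem : X i q ∈ L := Submodule.subset_span ⟨X, hXI, hXg, i, rfl⟩
      rw [hL0] at hmem
      simpa using hmem
    rw [hI]
    refine le_bot_iff.mp (Submodule.span_le.mpr ?_)
    rintro X ⟨hXI, hXhom⟩
    obtain ⟨_, ⟨g, rfl⟩, hXg⟩ := hXhom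
    have : X = 0 := by
      ext i q
      exact key q i X hXI ⟨g, hXg⟩
    simp [this]
  refine ⟨h1, h2, h3, ⟨lam.comp (Matrix.traceLinearMap (Fin n) k Δ), ?_, ?_, ?_⟩⟩
  · intro a b; exact h1 a b
  · intro g hg a ha; exact h2 g hg a ha
  · intro I hI hIl; exact h3 I hI hIl
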